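/- Let f ∈ S_w(r) be a binary invariant of weight w in r variables and let f* be the coefficient of a_r^w in f. Then f* is invariant under simultaneous translation of a_1,...,a_{r-1}: f*(a_1+λ,...,a_{r-1}+λ) = f*(a_1,...,a_{r-1}) for all λ ∈ C; hence f* lies in C[a_i − a_j : 1 ≤ i < j ≤ r−1]. -/
import Mathlib

open MvPolynomial

def IsBinaryInvariant (r w : ℕ) (f : MvPolynomial (Fin r) ℂ) : Prop :=
  ∀ A B C D : ℝ, A * D - B * C = 1 →
    ∀ a : Fin r → ℂ, (∀ i, (C : ℂ) * a i + (D : ℂ) ≠ 0) →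
      eval a f =
        eval (fun i => ((A : ℂ) * a i + (B : ℂ)) / ((C : ℂ) * a i + (D : ℂ))) f *
          ∏ i, ((C : ℂ) * a i + (D : ℂ)) ^ w

/-- The star map: the coefficient of the highest power of the last variable. -/
noncomputable def star {n : ℕ} (f : MvPolynomial (Fin (n + 1)) ℂ) : MvPolynomial (Fin n) ℂ :=
  ∑ m ∈ f.support.filter (fun m => m (Fin.last n) = f.degreeOf (Fin.last n)),
    monomial (Finsupp.comapDomain Fin.castSucc m (Fin.castSucc_injective n).injOn)
      (coeff m f)

noncomputable def phi {r : ℕ} (b : Fin r → ℂ) :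
    MvPolynomial (Fin (r + 1)) ℂ →+* Polynomial ℂ :=
  MvPolynomial.eval₂Hom Polynomial.C
    (fun i => Fin.lastCases Polynomial.X (fun j => Polynomial.C (b j)) i)

lemma eval_phi {r : ℕ} (b : Fin r → ℂ) (y : ℂ) (f : MvPolynomial (Fin (r + 1)) ℂ) :
    (phi b f).eval y = eval (fun i => Fin.lastCases y b i) f := by
  have h : (Polynomial.evalRingHom y).comp (phi b) =
      (eval (fun i => Fin.lastCases y b i) : MvPolynomial (Fin (r + 1)) ℂ →+* ℂ) := by
    apply MvPolynomial.ringHom_ext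
    · intro c; simp [phi]
    · intro i
      induction i using Fin.lastCases <;> simp [phi]
  exact RingHom.congr_fun h f

lemma coeff_phi {r : ℕ} (b : Fin r → ℂ) (f : MvPolynomial (Fin (r + 1)) ℂ) (k : ℕ) :
    (phi b f).coeff k =
      ∑ m ∈ f.support.filter (fun m => m (Fin.last r) = k),
        coeff m f * ∏ j, b j ^ m (Fin.castSucc j) := by
  conv_lhs => rw [f.as_sum, map_sum, Polynomial.finset_sum_coeff]
  rw [Finset.sum_filter]
  apply Finset.sum_congr rfl
  intro m hm
  have : phi b (monomial m (coeff m f)) =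
      Polynomial.C (coeff m f * ∏ j, b j ^ m (Fin.castSucc j)) *
        Polynomial.X ^ m (Fin.last r) := by
    simp only [phi, eval₂Hom_monomial]
    rw [Finsupp.prod_fintype _ _ (fun i => pow_zero _), Fin.prod_univ_castSucc]
    simp [map_mul, map_prod, map_pow, mul_assoc]
  rw [this, Polynomial.coeff_C_mul, Polynomial.coeff_X_pow]
  by_cases h : m (Fin.last r) = k
  · simp [h]
  · rw [if_neg (fun h' => h h'.symm), if_neg h, mul_zero]

lemma eval_star' {r : ℕ} (b : Fin r → ℂ) (f : MvPolynomial (Fin (r + 1)) ℂ) (d : ℕ) :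
    eval b (∑ m ∈ f.support.filter (fun m => m (Fin.last r) = d),
      monomial (Finsupp.comapDomain Fin.castSucc m (Fin.castSucc_injective r).injOn)
        (coeff m f)) =
    ∑ m ∈ f.support.filter (fun m => m (Fin.last r) = d),
        coeff m f * ∏ j, b j ^ m (Fin.castSucc j) := by
  rw [map_sum]
  apply Finset.sum_congr rfl
  intro m hm
  rw [eval_monomial, Finsupp.prod_fintype _ _ (fun i => pow_zero _)]
  simp [Finsupp.comapDomain_apply]

lemma natDegree_phi_le {r : ℕ} (b : Fin r → ℂ) (f : MvPolynomial (Fin (r + 1)) ℂ) :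
    (phi b f).natDegree ≤ f.degreeOf (Fin.last r) := by
  rw [Polynomial.natDegree_le_iff_coeff_eq_zero]
  intro k hk
  rw [coeff_phi]
  apply Finset.sum_eq_zero
  intro m hm
  rw [Finset.mem_filter] at hm
  exfalso
  have : m (Fin.last r) ≤ f.degreeOf (Fin.last r) := by
    rw [degreeOf_eq_sup (Fin.last r) f]
    exact Finset.le_sup (f := fun m => m (Fin.last r)) hm.1
  omega

lemma coeff_comp_sub (P : Polynomial ℂ) (lam : ℂ) (d : ℕ) (hP : P.natDegree ≤ d) :
    (P.comp (Polynomial.X - Polynomial.C lam)).coeff d = P.coeff d := by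
  have hq1 : (Polynomial.X - Polynomial.C lam).natDegree = 1 := Polynomial.natDegree_X_sub_C lam
  have hcomp : (P.comp (Polynomial.X - Polynomial.C lam)).natDegree = P.natDegree := by
    rw [Polynomial.natDegree_comp, hq1, mul_one]
  rcases lt_or_eq_of_le hP with h | h
  · rw [Polynomial.coeff_eq_zero_of_natDegree_lt (hcomp ▸ h),
      Polynomial.coeff_eq_zero_of_natDegree_lt h]
  · have h1 : P.coeff d = P.leadingCoeff := by rw [Polynomial.leadingCoeff, h]
    have h2 : (P.comp (Polynomial.X - Polynomial.C lam)).coeff d =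
        (P.comp (Polynomial.X - Polynomial.C lam)).leadingCoeff := by
      rw [Polynomial.leadingCoeff, hcomp, h]
    rw [h1, h2, Polynomial.leadingCoeff_comp (by rw [hq1]; exact one_ne_zero),
      (Polynomial.monic_X_sub_C lam).leadingCoeff, one_pow, mul_one]

lemma htrans {r w : ℕ} (f : MvPolynomial (Fin (r + 1)) ℂ)
    (hinv : IsBinaryInvariant (r + 1) w f) :
    ∀ (a : Fin (r + 1) → ℂ) (lam : ℂ), eval (fun i => a i + lam) f = eval a f := by
  intro a
  set ψ : MvPolynomial (Fin (r + 1)) ℂ →+* Polynomial ℂ :=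
    eval₂Hom Polynomial.C (fun i => Polynomial.C (a i) + Polynomial.X) with hψ
  have heval : ∀ t : ℂ, (ψ f).eval t = eval (fun i => a i + t) f := by
    intro t
    have h : (Polynomial.evalRingHom t).comp ψ =
        (eval (fun i => a i + t) : MvPolynomial (Fin (r + 1)) ℂ →+* ℂ) := by
      apply MvPolynomial.ringHom_ext <;> intros <;> simp [hψ]
    exact RingHom.congr_fun h f
  have hreal : ∀ t : ℝ, (ψ f).eval (t : ℂ) = eval a f := by
    intro t
    rw [heval]
    have h := hinv 1 t 0 1 (by ring) a (by intro i; norm_num)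
    simp only [Complex.ofReal_one, Complex.ofReal_zero, one_mul, zero_mul, zero_add,
      div_one, one_pow, Finset.prod_const_one, mul_one] at h
    exact h.symm
  have hC : ψ f = Polynomial.C (eval a f) := by
    have h0 : (ψ f - Polynomial.C (eval a f)) = 0 := by
      apply Polynomial.eq_zero_of_infinite_isRoot
      apply Set.Infinite.mono (s := Set.range (Complex.ofReal))
      · rintro _ ⟨t, rfl⟩
        simp [Polynomial.IsRoot, hreal t]
      · exact Set.infinite_range_of_injective Complex.ofReal_injective
    exact sub_eq_zero.mp h0
  intro lam
  rw [← heval, hC, Polynomial.eval_C]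

lemma phi_translate {r : ℕ} (f : MvPolynomial (Fin (r + 1)) ℂ)
    (htr : ∀ (a : Fin (r + 1) → ℂ) (lam : ℂ), eval (fun i => a i + lam) f = eval a f)
    (b : Fin r → ℂ) (lam : ℂ) :
    phi (fun j => b j + lam) f = (phi b f).comp (Polynomial.X - Polynomial.C lam) := by
  apply Polynomial.funext
  intro y
  rw [Polynomial.eval_comp]
  simp only [Polynomial.eval_sub, Polynomial.eval_X, Polynomial.eval_C]
  rw [eval_phi, eval_phi]
  have hfun : (fun i => Fin.lastCases y (fun j => b j + lam) i) =
      (fun i => (Fin.lastCases (y - lam) b i : ℂ) + lam) := by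
    funext i
    induction i using Fin.lastCases <;> simp
  rw [hfun, htr]

lemma eval_aeval' {r : ℕ} (g : Fin r → MvPolynomial (Fin r) ℂ) (b : Fin r → ℂ)
    (p : MvPolynomial (Fin r) ℂ) :
    eval b (aeval g p) = eval (fun i => eval b (g i)) p := by
  have h : (eval b).comp ((aeval g : MvPolynomial (Fin r) ℂ →ₐ[ℂ] _) :
      MvPolynomial (Fin r) ℂ →+* MvPolynomial (Fin r) ℂ) =
      (eval (fun i => eval b (g i)) : MvPolynomial (Fin r) ℂ →+* ℂ) := by
    apply MvPolynomial.ringHom_ext <;> intros <;> simp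
  exact RingHom.congr_fun h p

/-- For `f ∈ S_w(r)`, the star `f*` is invariant under simultaneous translation of
its variables, hence lies in `ℂ[aᵢ - aⱼ : 1 ≤ i < j ≤ r-1]`. -/
theorem stmt5 (r w : ℕ) (f : MvPolynomial (Fin (r + 1)) ℂ)
    (hinv : IsBinaryInvariant (r + 1) w f) :
    (∀ (b : Fin r → ℂ) (lam : ℂ), eval (fun i => b i + lam) (star f) = eval b (star f)) ∧
    star f ∈ Algebra.adjoin ℂ
      {p : MvPolynomial (Fin r) ℂ | ∃ i j : Fin r, i < j ∧ p = X i - X j} := by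
  have htr := htrans f hinv
  have hstar : ∀ b : Fin r → ℂ,
      eval b (star f) = (phi b f).coeff (f.degreeOf (Fin.last r)) := by
    intro b
    rw [show (star f : MvPolynomial (Fin r) ℂ) =
      ∑ m ∈ f.support.filter (fun m => m (Fin.last r) = f.degreeOf (Fin.last r)),
        monomial (Finsupp.comapDomain Fin.castSucc m (Fin.castSucc_injective r).injOn)
          (coeff m f) from rfl, eval_star', coeff_phi]
  have part1 : ∀ (b : Fin r → ℂ) (lam : ℂ),
      eval (fun i => b i + lam) (star f) = eval b (star f) := by
    intro b lam
    rw [hstar, hstar b, phi_translate f htr b lam,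
      coeff_comp_sub _ _ _ (natDegree_phi_le b f)]
  refine ⟨part1, ?_⟩
  set S : Set (MvPolynomial (Fin r) ℂ) :=
    {p : MvPolynomial (Fin r) ℂ | ∃ i j : Fin r, i < j ∧ p = X i - X j} with hS
  rcases isEmpty_or_nonempty (Fin r) with hE | hNE
  · obtain ⟨c, hc⟩ := MvPolynomial.C_surjective (Fin r) (star f)
    rw [← hc]
    exact Subalgebra.algebraMap_mem (Algebra.adjoin ℂ S) c
  · have i0 : Fin r := Classical.arbitrary (Fin r)
    set g : Fin r → MvPolynomial (Fin r) ℂ := fun i => X i - X i0 with hg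
    have hrepr : star f = aeval g (star f) := by
      apply MvPolynomial.funext
      intro b
      rw [eval_aeval']
      have hfun : (fun i => eval b (g i)) = fun i => b i + (-(b i0)) := by
        funext i
        simp [hg]
        ring
      rw [hfun, part1]
    have hgmem : ∀ i, g i ∈ Algebra.adjoin ℂ S := by
      intro i
      rcases lt_trichotomy i i0 with h | h | h
      · exact Algebra.subset_adjoin ⟨i, i0, h, rfl⟩
      · have : g i = 0 := by rw [hg]; simp [h]
        rw [this]; exact zero_mem _
      · have : g i = -(X i0 - X i) := by rw [hg]; ring
        rw [this]
        exact neg_mem (Algebra.subset_adjoin ⟨i0, i, h, rfl⟩)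
    set A := Algebra.adjoin ℂ S with hA
    have key : aeval g (star f) = A.val (aeval (fun i => (⟨g i, hgmem i⟩ : A)) (star f)) := by
      rw [MvPolynomial.comp_aeval_apply]
      rfl
    rw [hrepr, key]
    exact SetLike.coe_mem _
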